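/- Let P ⊆ ℝ^d, h > 0, x, y ∈ ℝ^d, and let p = (p_1, …, p_m) ∈ Π_{h,P}(x,y) be an optimal path, i.e. L(p) = d_{h,P}(x,y), which moreover has the smallest number of elements m among all optimal paths in Π_{h,P}(x,y). Then for every γ > 0 and every index 1 ≤ j ≤ m−2 the following hop dichotomy holds: if |p_{j+1} − p_j| ≤ γ, then |p_{j+2} − p_{j+1}| > h − γ. -/

import Mathlib

open scoped ENNReal

noncomputable section

/-- A point in Euclidean space `ℝ^d`. -/
abbrev Pt (d : ℕ) := EuclideanSpace ℝ (Fin d)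

/-- `p = (p₀, …, p_m)` is an admissible path in `P` from `x` to `y` with step size `h`:
all its points lie in `P`, the first point is within `h/2` of `x`, the last within `h/2`
of `y`, and consecutive points are at distance at most `h`. (A path with `m + 1` points
corresponds to a path with `m` elements in the paper, which is always nonempty.) -/
def IsPath {d : ℕ} (P : Set (Pt d)) (h : ℝ) (x y : Pt d) {m : ℕ}
    (p : Fin (m + 1) → Pt d) : Prop :=
  (∀ i, p i ∈ P) ∧ dist x (p 0) ≤ h / 2 ∧ dist y (p (Fin.last m)) ≤ h / 2 ∧
    ∀ i : Fin m, dist (p i.castSucc) (p i.succ) ≤ h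

/-- The length `L(p)` of a path: the sum of the lengths of its hops. -/
def pathLength {d m : ℕ} (p : Fin (m + 1) → Pt d) : ℝ :=
  ∑ i : Fin m, dist (p i.castSucc) (p i.succ)

/-- The distance `d_{h,P}(x,y) ∈ [0,∞]`: the infimum of the lengths of admissible
paths in `P` from `x` to `y` with step size `h` (equal to `+∞` if there is none). -/
def graphDist {d : ℕ} (P : Set (Pt d)) (h : ℝ) (x y : Pt d) : ℝ≥0∞ :=
  ⨅ (m : ℕ) (p : Fin (m + 1) → Pt d) (_ : IsPath P h x y p),
    ENNReal.ofReal (pathLength p)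

/-- **Hop dichotomy.** Let `p ∈ Π_{h,P}(x,y)` be an optimal path (`L(p) = d_{h,P}(x,y)`)
with the smallest number of points among all optimal paths. Then for every `γ > 0`
and every consecutive triple `(p_j, p_{j+1}, p_{j+2})` of points of the path:
if `|p_{j+1} - p_j| ≤ γ` then `|p_{j+2} - p_{j+1}| > h - γ`. -/
theorem hop_dichotomy {d : ℕ} (hd : 1 ≤ d) (P : Set (Pt d)) (h : ℝ) (hh : 0 < h)
    (x y : Pt d) {m : ℕ} (p : Fin (m + 1) → Pt d) (hp : IsPath P h x y p)
    (hopt : ENNReal.ofReal (pathLength p) = graphDist P h x y)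
    (hmin : ∀ (m' : ℕ) (q : Fin (m' + 1) → Pt d), IsPath P h x y q →
      ENNReal.ofReal (pathLength q) = graphDist P h x y → m ≤ m')
    (γ : ℝ) (hγ : 0 < γ) (j : ℕ) (hj : j + 2 ≤ m)
    (hshort : dist (p ⟨j, by omega⟩) (p ⟨j + 1, by omega⟩) ≤ γ) :
    h - γ < dist (p ⟨j + 1, by omega⟩) (p ⟨j + 2, by omega⟩) := by
  by_contra hcon
  push_neg at hcon
  have hm2 : 2 ≤ m := by omega
  -- extended points
  set pn : ℕ → Pt d := fun i => p ⟨min i m, Nat.lt_succ_of_le (min_le_right i m)⟩ with hpn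
  have hpn_eq : ∀ (i : ℕ) (hi : i ≤ m), pn i = p ⟨i, by omega⟩ := by
    intro i hi
    simp only [hpn]
    apply congrArg
    apply Fin.ext
    simp [Nat.min_eq_left hi]
  set g : ℕ → ℝ := fun i => dist (pn i) (pn (i + 1)) with hg
  set qn : ℕ → Pt d := fun i => if i ≤ j then pn i else pn (i + 1) with hqn
  set f : ℕ → ℝ := fun i => dist (qn i) (qn (i + 1)) with hf
  have hgle : ∀ i, i < m → g i ≤ h := by
    intro i hi
    have := hp.2.2.2 ⟨i, hi⟩
    have e1 : p (Fin.castSucc ⟨i, hi⟩) = pn i := by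
      rw [hpn_eq i (by omega)]; rfl
    have e2 : p (Fin.succ ⟨i, hi⟩) = pn (i + 1) := by
      rw [hpn_eq (i + 1) (by omega)]; rfl
    rw [e1, e2] at this
    exact this
  have hLp : pathLength p = ∑ i ∈ Finset.range m, g i := by
    rw [pathLength, ← Fin.sum_univ_eq_sum_range]
    refine Finset.sum_congr rfl fun i _ => ?_
    show dist (p i.castSucc) (p i.succ) = dist (pn i.val) (pn (i.val + 1))
    rw [hpn_eq i.val (by omega), hpn_eq (i.val + 1) (by omega)]
    rfl
  -- the shortened path
  set q : Fin (m - 1 + 1) → Pt d := fun i => qn i.val with hqdef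
  have hq0 : q 0 = p 0 := by
    simp only [hqdef, hqn, Fin.val_zero]
    simp only [Nat.zero_le, ↓reduceIte]
    rw [hpn_eq 0 (by omega)]
    rfl
  have hqlast : q (Fin.last (m - 1)) = p (Fin.last m) := by
    simp only [hqdef, hqn, Fin.val_last]
    rw [if_neg (by omega), hpn_eq (m - 1 + 1) (by omega)]
    apply congrArg
    apply Fin.ext
    simp only [Fin.val_last]
    omega
  have hfg_lt : ∀ i, i < j → f i = g i := by
    intro i hi
    simp only [hf, hg, hqn]
    rw [if_pos (by omega), if_pos (by omega)]
  have hfj : f j ≤ g j + g (j + 1) := by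
    simp only [hf, hg, hqn]
    rw [if_pos le_rfl, if_neg (by omega)]
    exact dist_triangle _ (pn (j + 1)) _
  have hfjh : f j ≤ h := by
    have e1 : pn j = p ⟨j, by omega⟩ := hpn_eq j (by omega)
    have e2 : pn (j + 1) = p ⟨j + 1, by omega⟩ := hpn_eq (j + 1) (by omega)
    have e3 : pn (j + 2) = p ⟨j + 2, by omega⟩ := hpn_eq (j + 2) (by omega)
    calc f j ≤ g j + g (j + 1) := hfj
    _ = dist (p ⟨j, by omega⟩) (p ⟨j + 1, by omega⟩)
        + dist (p ⟨j + 1, by omega⟩) (p ⟨j + 2, by omega⟩) := by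
          simp only [hg]; rw [e1, e2, e3]
    _ ≤ γ + (h - γ) := add_le_add hshort hcon
    _ = h := by ring
  have hfg_gt : ∀ i, j < i → f i = g (i + 1) := by
    intro i hi
    simp only [hf, hg, hqn]
    rw [if_neg (by omega), if_neg (by omega)]
  have hqpath : IsPath P h x y q := by
    refine ⟨?_, ?_, ?_, ?_⟩
    · intro i
      simp only [hqdef, hqn]
      split <;> exact hp.1 _
    · rw [hq0]; exact hp.2.1
    · rw [hqlast]; exact hp.2.2.1
    · intro i
      have hiv : i.val < m - 1 := i.isLt
      have hcs : q i.castSucc = qn i.val := rfl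
      have hss : q i.succ = qn (i.val + 1) := rfl
      rw [hcs, hss]
      show f i.val ≤ h
      rcases lt_trichotomy i.val j with hlt | heq | hgt
      · rw [hfg_lt _ hlt]; exact hgle _ (by omega)
      · rw [heq]; exact hfjh
      · rw [hfg_gt _ hgt]; exact hgle _ (by omega)
  have hLq : pathLength q = ∑ i ∈ Finset.range (m - 1), f i := by
    rw [pathLength, ← Fin.sum_univ_eq_sum_range]
    exact Finset.sum_congr rfl fun i _ => rfl
  have key : ∑ i ∈ Finset.range (m - 1), f i ≤ ∑ i ∈ Finset.range m, g i := by
    have h1 : ∑ i ∈ Finset.range (m - 1), f i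
        = (∑ i ∈ Finset.range j, f i + f j) + ∑ i ∈ Finset.Ico (j + 1) (m - 1), f i := by
      rw [← Finset.sum_range_succ, Finset.range_eq_Ico, Finset.range_eq_Ico,
        Finset.sum_Ico_consecutive _ (by omega) (by omega)]
    have h2 : ∑ i ∈ Finset.range m, g i
        = ((∑ i ∈ Finset.range j, g i + g j) + g (j + 1)) + ∑ i ∈ Finset.Ico (j + 2) m, g i := by
      rw [← Finset.sum_range_succ, ← Finset.sum_range_succ, Finset.range_eq_Ico, Finset.range_eq_Ico,
        Finset.sum_Ico_consecutive _ (by omega) (by omega)]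
    have h3 : ∑ i ∈ Finset.range j, f i = ∑ i ∈ Finset.range j, g i :=
      Finset.sum_congr rfl fun i hi => hfg_lt i (Finset.mem_range.mp hi)
    have h5 : ∑ i ∈ Finset.Ico (j + 1) (m - 1), f i = ∑ i ∈ Finset.Ico (j + 2) m, g i := by
      rw [Finset.sum_Ico_eq_sum_range, Finset.sum_Ico_eq_sum_range]
      have e : m - 1 - (j + 1) = m - (j + 2) := by omega
      rw [e]
      refine Finset.sum_congr rfl fun i _ => ?_
      rw [hfg_gt (j + 1 + i) (by omega)]
      congr 1
      omega
    rw [h1, h2, h3, h5]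
    have := hfj
    linarith
  have hqlen_le : ENNReal.ofReal (pathLength q) ≤ ENNReal.ofReal (pathLength p) := by
    apply ENNReal.ofReal_le_ofReal
    rw [hLp, hLq]; exact key
  have hge : graphDist P h x y ≤ ENNReal.ofReal (pathLength q) := by
    rw [graphDist]
    exact iInf_le_of_le (m - 1) (iInf_le_of_le q (iInf_le _ hqpath))
  have heq2 : ENNReal.ofReal (pathLength q) = graphDist P h x y :=
    le_antisymm (hqlen_le.trans hopt.le) hge
  have := hmin (m - 1) q hqpath heq2
  omega
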